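/- The map L is injective, and Ω¹ decomposes as the direct sum of ℂ-vector subspaces Ω¹ = L(Ω¹) ⊕ (⊕_{i=1}^l π₀·e_i^{(0)}): every ω ∈ Ω¹ can be written uniquely as ω = L(ξ) + ∑_{i=1}^l Y_i·e_i^{(0)} with ξ ∈ Ω¹ and Y_1, …, Y_l ∈ π₀. (Every element of Ω¹_∂ = Ω¹/L(Ω¹) is uniquely represented in the form ∑_i Y_i du_i^{(0)}.) -/

import Mathlib

open MvPolynomial

noncomputable section

/-- The algebra of differential polynomials in the variables `u_i^{(n)}`, `1 ≤ i ≤ l`, `n ≥ 0`. -/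
abbrev Pi0 (l : ℕ) : Type := MvPolynomial (Fin l × ℕ) ℂ

/-- The variable `u_i^{(n)}`. -/
def u {l : ℕ} (i : Fin l) (n : ℕ) : Pi0 l := X (i, n)

/-- The derivation `∂` with `∂ u_i^{(n)} = u_i^{(n+1)}`. -/
def pa (l : ℕ) : Derivation ℂ (Pi0 l) (Pi0 l) :=
  mkDerivation ℂ (fun p => X (p.1, p.2 + 1))

/-- The module of one-forms: the free `π₀`-module with basis `e_i^{(n)} = du_i^{(n)}`,
realized as finitely supported functions `(Fin l × ℕ) →₀ π₀`. -/
abbrev Omega1 (l : ℕ) : Type := (Fin l × ℕ) →₀ Pi0 l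

/-- The Lie derivative along `∂`: the unique `ℂ`-linear map with
`L(f·e_i^{(n)}) = (∂f)·e_i^{(n)} + f·e_i^{(n+1)}`. -/
def LieD (l : ℕ) : Omega1 l →ₗ[ℂ] Omega1 l :=
  Finsupp.lsum ℂ (fun p =>
    (Finsupp.lsingle p).comp (pa l).toLinearMap + Finsupp.lsingle (p.1, p.2 + 1))

lemma lieD_apply {l : ℕ} (ω : Omega1 l) (q : Fin l × ℕ) :
    (LieD l ω) q = pa l (ω q) + (match q.2 with | 0 => 0 | n+1 => ω (q.1, n)) := by
  induction ω using Finsupp.induction_linear with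
  | zero => simp; cases q.2 <;> simp
  | add f g hf hg =>
      rw [map_add, Finsupp.add_apply, hf, hg, Finsupp.add_apply, map_add]
      cases q.2 <;> simp <;> ring
  | single p c =>
      rcases p with ⟨i, n⟩
      rcases q with ⟨j, m⟩
      simp only [LieD, Finsupp.lsum_single, LinearMap.add_apply, LinearMap.comp_apply,
        Finsupp.lsingle_apply, Derivation.coeFn_coe, Finsupp.add_apply,
        Finsupp.single_apply]
      cases m with
      | zero => simp [Prod.ext_iff]; split <;> simp_all
      | succ m =>
        simp only [Prod.mk.injEq]
        by_cases h1 : i = j <;> by_cases h2 : n = m + 1 <;> by_cases h3 : n = m <;> simp_all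

lemma lieD_apply_zero {l : ℕ} (ω : Omega1 l) (j : Fin l) :
    (LieD l ω) (j, 0) = pa l (ω (j, 0)) := by
  rw [lieD_apply]; simp

lemma lieD_apply_succ {l : ℕ} (ω : Omega1 l) (j : Fin l) (n : ℕ) :
    (LieD l ω) (j, n + 1) = pa l (ω (j, n + 1)) + ω (j, n) := by
  rw [lieD_apply]

lemma sumSingle_apply_zero {l : ℕ} (Y : Fin l → Pi0 l) (j : Fin l) :
    (∑ i : Fin l, Finsupp.single (i, 0) (Y i) : Omega1 l) (j, 0) = Y j := by
  rw [Finsupp.finset_sum_apply, Finset.sum_eq_single j]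
  · simp
  · intro i _ hij; simp [Finsupp.single_apply, Prod.ext_iff, hij]
  · simp

lemma sumSingle_apply_succ {l : ℕ} (Y : Fin l → Pi0 l) (j : Fin l) (n : ℕ) :
    (∑ i : Fin l, Finsupp.single (i, 0) (Y i) : Omega1 l) (j, n + 1) = 0 := by
  rw [Finsupp.finset_sum_apply]
  apply Finset.sum_eq_zero
  intro i _
  simp [Finsupp.single_apply, Prod.ext_iff]

lemma ker_lemma {l : ℕ} (ξ : Omega1 l) (Y : Fin l → Pi0 l)
    (h : LieD l ξ + ∑ i : Fin l, Finsupp.single (i, 0) (Y i) = 0) : ξ = 0 ∧ Y = 0 := by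
  have hξ : ξ = 0 := by
    by_contra hne
    have hsupp : ξ.support.Nonempty := Finsupp.support_nonempty_iff.2 hne
    obtain ⟨p, hp, hpN⟩ := Finset.exists_mem_eq_sup _ hsupp Prod.snd
    obtain ⟨i, n⟩ := p
    have hbound : ∀ r ∈ ξ.support, r.2 ≤ n := fun r hr => by
      have := Finset.le_sup (f := Prod.snd) hr
      omega
    have h1 : ξ (i, n + 1) = 0 := by
      by_contra hc
      have := hbound _ (Finsupp.mem_support_iff.2 hc)
      simp at this
    have h2 := congrArg (fun f : Omega1 l => f (i, n + 1)) h
    simp only [Finsupp.add_apply, Finsupp.coe_zero, Pi.zero_apply] at h2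
    rw [lieD_apply_succ, sumSingle_apply_succ, h1, map_zero] at h2
    have : ξ (i, n) ≠ 0 := Finsupp.mem_support_iff.1 hp
    simp_all
  subst hξ
  rw [map_zero, zero_add] at h
  refine ⟨rfl, funext fun i => ?_⟩
  have := congrArg (fun f : Omega1 l => f (i, 0)) h
  simpa [sumSingle_apply_zero] using this

lemma exists_rep {l : ℕ} (N : ℕ) (ω : Omega1 l) (hb : ∀ r ∈ ω.support, r.2 ≤ N) :
    ∃ ξ : Omega1 l, ∃ Y : Fin l → Pi0 l,
      ω = LieD l ξ + ∑ i : Fin l, Finsupp.single (i, 0) (Y i) := by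
  induction N generalizing ω with
  | zero =>
      refine ⟨0, fun i => ω (i, 0), ?_⟩
      rw [map_zero, zero_add]
      refine Finsupp.ext fun q => ?_
      rcases q with ⟨j, m⟩
      cases m with
      | zero => rw [sumSingle_apply_zero]
      | succ m =>
          rw [sumSingle_apply_succ]
          by_contra hc
          have := hb _ (Finsupp.mem_support_iff.2 hc)
          omega
  | succ N ih =>
      set τ : Omega1 l := ∑ i : Fin l, Finsupp.single (i, N) (ω (i, N + 1)) with hτ
      have hτapp : ∀ j m, τ (j, m) = if m = N then ω (j, N + 1) else 0 := by
        intro j m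
        rw [hτ, Finsupp.finset_sum_apply]
        by_cases hm : m = N
        · subst hm
          rw [if_pos rfl, Finset.sum_eq_single j]
          · simp
          · intro i _ hij; simp [Finsupp.single_apply, Prod.ext_iff, hij]
          · simp
        · rw [if_neg hm]
          apply Finset.sum_eq_zero
          intro i _
          simp [Finsupp.single_apply, Prod.ext_iff, Ne.symm hm]
      have hb' : ∀ r ∈ (ω - LieD l τ).support, r.2 ≤ N := by
        rintro ⟨j, m⟩ hr
        by_contra hc
        push_neg at hc
        apply Finsupp.mem_support_iff.1 hr
        have hω : (ω - LieD l τ) (j, m) = ω (j, m) - (LieD l τ) (j, m) := rfl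
        simp only at hc
        obtain ⟨m, rfl⟩ : ∃ m', m = m' + 1 := ⟨m - 1, by omega⟩
        rw [hω, lieD_apply_succ]
        have hτ1 : τ (j, m + 1) = 0 := by rw [hτapp]; simp; omega
        by_cases hm : m = N
        · subst hm
          rw [hτ1, map_zero, hτapp, if_pos rfl]
          simp
        · have hωz : ω (j, m + 1) = 0 := by
            by_contra hz
            have := hb _ (Finsupp.mem_support_iff.2 hz)
            simp at this; omega
          rw [hτ1, map_zero, hτapp, if_neg hm, hωz]
          simp
      obtain ⟨ξ', Y, hrep⟩ := ih (ω - LieD l τ) hb'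
      refine ⟨ξ' + τ, Y, ?_⟩
      rw [map_add]
      rw [sub_eq_iff_eq_add] at hrep
      rw [hrep]; abel

/-- `L` is injective and `Ω¹ = L(Ω¹) ⊕ (⊕_{i=1}^l π₀·e_i^{(0)})`: every
`ω ∈ Ω¹` is uniquely `ω = L(ξ) + ∑_i Y_i·e_i^{(0)}` with `ξ ∈ Ω¹`, `Y_i ∈ π₀`. -/
theorem omega1_decomposition (l : ℕ) (hl : 1 ≤ l) :
    Function.Injective (LieD l) ∧
    ∀ ω : Omega1 l, ∃! p : Omega1 l × (Fin l → Pi0 l),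
      ω = LieD l p.1 + ∑ i : Fin l, Finsupp.single (i, 0) (p.2 i) := by

  have ker : ∀ (ξ : Omega1 l) (Y : Fin l → Pi0 l),
      LieD l ξ + ∑ i : Fin l, Finsupp.single (i, 0) (Y i) = 0 → ξ = 0 ∧ Y = 0 := ker_lemma
  constructor
  · intro a b hab
    have h0 : LieD l (a - b) + ∑ i : Fin l, Finsupp.single (i, 0) ((0 : Fin l → Pi0 l) i) = 0 := by
      simp [map_sub, hab]
    have := (ker _ _ h0).1
    rwa [sub_eq_zero] at this
  · intro ω
    obtain ⟨ξ, Y, hrep⟩ := exists_rep (ω.support.sup Prod.snd) ω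
      (fun r hr => Finset.le_sup (f := Prod.snd) hr)
    refine ⟨(ξ, Y), hrep, ?_⟩
    rintro ⟨ξ', Y'⟩ hrep'
    have h0 : LieD l (ξ' - ξ) + ∑ i : Fin l, Finsupp.single (i, 0) ((Y' - Y) i) = 0 := by
      have : (∑ i : Fin l, Finsupp.single (i, 0) ((Y' - Y) i) : Omega1 l)
          = ∑ i : Fin l, Finsupp.single (i, 0) (Y' i) - ∑ i : Fin l, Finsupp.single (i, 0) (Y i) := by
        rw [← Finset.sum_sub_distrib]
        refine Finset.sum_congr rfl fun i _ => ?_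
        rw [Pi.sub_apply, Finsupp.single_sub]
      rw [this, map_sub]
      have := hrep.symm.trans hrep'
      rw [eq_comm, ← sub_eq_zero] at this
      rw [← this]
      abel
    obtain ⟨h1, h2⟩ := ker _ _ h0
    rw [sub_eq_zero] at h1
    rw [sub_eq_zero] at h2
    exact Prod.ext h1 h2
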